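/- arXiv:2201.13097 — 3 statements merged into one kernel-verified Lean document; each statement's English description precedes it below -/
import Mathlib

section
/- Bias lemma: Let f_1,…,f_N : ℝ^d → ℝ be convex, each f_i minimized at x_i*, and suppose f_i(x_j*) − f_i(x_i*) ≤ b_{ij} for all i,j. Let Λ = (λ_{ij}) be a row-stochastic N×N matrix (nonnegative entries with each row summing to 1). Define f^Λ(y) = (1/N) Σ_i f_i((Λy)_i) for y ∈ (ℝ^d)^N, let x^Λ be a minimizer of f^Λ, and f̄(x*) = (1/N) Σ_i f_i(x_i*). Then f^Λ(x^Λ) − f̄(x*) ≤ (1/N) Σ_{i,j} λ_{ij} b_{ij}. -/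
open Finset

/-- Bias lemma: for convex `f_i` with minimizers `x_i*`, generalization gaps bounded by
`b_{ij}`, and a row-stochastic matrix `Λ`, the minimum of
`f^Λ(y) = N⁻¹ ∑ᵢ f_i((Λy)_i)` exceeds `f̄(x*) = N⁻¹ ∑ᵢ f_i(x_i*)` by at most
`N⁻¹ ∑_{i,j} λ_{ij} b_{ij}`. -/
theorem bias_lemma {d N : ℕ} (hN : 0 < N)
    (f : Fin N → EuclideanSpace ℝ (Fin d) → ℝ)
    (hconv : ∀ i, ConvexOn ℝ Set.univ (f i))
    (xstar : Fin N → EuclideanSpace ℝ (Fin d))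
    (hmin : ∀ i, ∀ x, f i (xstar i) ≤ f i x)
    (b : Fin N → Fin N → ℝ)
    (hb : ∀ i j, f i (xstar j) - f i (xstar i) ≤ b i j)
    (Λ : Fin N → Fin N → ℝ)
    (hΛnonneg : ∀ i j, 0 ≤ Λ i j)
    (hΛrow : ∀ i, ∑ j, Λ i j = 1)
    (fΛ : (Fin N → EuclideanSpace ℝ (Fin d)) → ℝ)
    (hfΛ : ∀ y, fΛ y = (N : ℝ)⁻¹ * ∑ i, f i (∑ j, Λ i j • y j))
    (xΛ : Fin N → EuclideanSpace ℝ (Fin d))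
    (hxΛ : ∀ y, fΛ xΛ ≤ fΛ y) :
    fΛ xΛ - (N : ℝ)⁻¹ * ∑ i, f i (xstar i) ≤ (N : ℝ)⁻¹ * ∑ i, ∑ j, Λ i j * b i j := by
  have key : fΛ xΛ ≤ (N : ℝ)⁻¹ * ∑ i, ∑ j, Λ i j * (f i (xstar i) + b i j) := by
    calc fΛ xΛ ≤ fΛ xstar := hxΛ xstar
      _ = (N : ℝ)⁻¹ * ∑ i, f i (∑ j, Λ i j • xstar j) := hfΛ xstar
      _ ≤ (N : ℝ)⁻¹ * ∑ i, ∑ j, Λ i j * (f i (xstar i) + b i j) := by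
          apply mul_le_mul_of_nonneg_left _ (by positivity)
          apply Finset.sum_le_sum
          intro i _
          calc f i (∑ j, Λ i j • xstar j)
              ≤ ∑ j, Λ i j * f i (xstar j) :=
                (hconv i).map_sum_le (fun j _ => hΛnonneg i j) (hΛrow i)
                  (fun j _ => Set.mem_univ _)
            _ ≤ ∑ j, Λ i j * (f i (xstar i) + b i j) := by
                apply Finset.sum_le_sum
                intro j _
                exact mul_le_mul_of_nonneg_left (by linarith [hb i j]) (hΛnonneg i j)
  have : (N : ℝ)⁻¹ * ∑ i, ∑ j, Λ i j * (f i (xstar i) + b i j)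
      = (N : ℝ)⁻¹ * ∑ i, f i (xstar i) + (N : ℝ)⁻¹ * ∑ i, ∑ j, Λ i j * b i j := by
    rw [← mul_add, ← Finset.sum_add_distrib]
    congr 1
    apply Finset.sum_congr rfl
    intro i _
    simp only [mul_add, Finset.sum_add_distrib, ← Finset.sum_mul, hΛrow i, one_mul]
  linarith [key, this]
end

section
/- If f_i is μ-strongly convex (hence μ-PL) and satisfies the hypotheses of the previous gradient-norm-transfer statement, then f_i(x) − f_i(x_i*) ≤ (1/μ)Σ_j λ_j b̃_{ij} + 2(m+1)(L/μ)(f^λ(x) − f^λ(x^λ)) for all x, where x_i* minimizes f_i. -/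
open Finset
open scoped RealInnerProductSpace

/-- If in addition `f_i` is `μ`-strongly convex (hence `μ`-PL) with minimizer `x_i*`, then
under the gradient-dissimilarity hypotheses,
`f_i(x) − f_i(x_i*) ≤ (1/μ)∑_j λ_j b̃_{ij} + 2(m+1)(L/μ)(f^λ(x) − f^λ(x^λ))`. -/
theorem function_value_transfer {d N : ℕ}
    (f : Fin N → EuclideanSpace ℝ (Fin d) → ℝ) (hdiff : ∀ j, Differentiable ℝ (f j))
    (lam : Fin N → ℝ) (hlam_nonneg : ∀ j, 0 ≤ lam j) (hlam_sum : ∑ j, lam j = 1)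
    (flam : EuclideanSpace ℝ (Fin d) → ℝ)
    (hflam : ∀ x, flam x = ∑ j, lam j * f j x)
    (L : ℝ) (hL : 0 < L)
    (hsmooth : ∀ x y, flam y ≤ flam x + ⟪gradient flam x, y - x⟫ + L / 2 * ‖y - x‖ ^ 2)
    (xlam : EuclideanSpace ℝ (Fin d)) (hxlam : ∀ x, flam xlam ≤ flam x)
    (i : Fin N) (m : ℝ) (hm : 0 ≤ m)
    (btil : Fin N → Fin N → ℝ) (hbtil : ∀ i' j, 0 ≤ btil i' j)
    (hdissim : ∀ x, ‖gradient (f i) x - gradient flam x‖ ^ 2 ≤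
      m * ‖gradient flam x‖ ^ 2 + ∑ j, lam j * btil i j)
    (μ : ℝ) (hμ : 0 < μ)
    -- μ-strong convexity of f_i
    (hsc : ∀ x y, f i x + ⟪gradient (f i) x, y - x⟫ + μ / 2 * ‖y - x‖ ^ 2 ≤ f i y)
    (xistar : EuclideanSpace ℝ (Fin d)) (histar : ∀ x, f i xistar ≤ f i x) :
    ∀ x, f i x - f i xistar ≤
      (1 / μ) * ∑ j, lam j * btil i j + 2 * (m + 1) * (L / μ) * (flam x - flam xlam) := by
  intro x
  set g := gradient (f i) x with hg
  set G := gradient flam x with hG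
  set B := ∑ j, lam j * btil i j with hBdef
  have hB : 0 ≤ B := Finset.sum_nonneg fun j _ => mul_nonneg (hlam_nonneg j) (hbtil i j)
  -- PL inequality for f_i
  have hPL : 2 * μ * (f i x - f i xistar) ≤ ‖g‖ ^ 2 := by
    have h1 := hsc x xistar
    have h2 : -(‖g‖ * ‖xistar - x‖) ≤ ⟪g, xistar - x⟫ :=
      neg_le_of_abs_le (abs_real_inner_le_norm g (xistar - x))
    nlinarith [sq_nonneg (μ * ‖xistar - x‖ - ‖g‖), norm_nonneg (xistar - x), norm_nonneg g]
  -- smoothness gives gradient bound at x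
  have hGb : ‖G‖ ^ 2 ≤ 2 * L * (flam x - flam xlam) := by
    have h1 := hsmooth x (x - (1 / L) • G)
    have h2 := hxlam (x - (1 / L) • G)
    have hy : (x - (1 / L) • G) - x = -((1 / L) • G) := by abel
    rw [hy] at h1
    have hip : ⟪G, -((1 / L) • G)⟫ = -(1 / L * ‖G‖ ^ 2) := by
      rw [inner_neg_right, real_inner_smul_right, real_inner_self_eq_norm_sq]
    have hn : ‖-((1 / L) • G)‖ ^ 2 = (1 / L) ^ 2 * ‖G‖ ^ 2 := by
      rw [norm_neg, norm_smul, Real.norm_eq_abs, abs_of_pos (one_div_pos.mpr hL)]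
      ring
    rw [hip, hn] at h1
    have hL' : L ≠ 0 := ne_of_gt hL
    have e : flam x + -(1 / L * ‖G‖ ^ 2) + L / 2 * ((1 / L) ^ 2 * ‖G‖ ^ 2)
        = flam x - ‖G‖ ^ 2 / (2 * L) := by
      field_simp
      ring
    rw [e] at h1
    have h3 : ‖G‖ ^ 2 / (2 * L) ≤ flam x - flam xlam := by linarith
    rw [div_le_iff₀ (by positivity)] at h3
    linarith
  -- gradient norm transfer
  have htri : ‖g‖ ≤ ‖g - G‖ + ‖G‖ := by
    calc ‖g‖ = ‖(g - G) + G‖ := by rw [sub_add_cancel]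
    _ ≤ ‖g - G‖ + ‖G‖ := norm_add_le _ _
  have hsq : ‖g‖ ^ 2 ≤ 2 * ‖g - G‖ ^ 2 + 2 * ‖G‖ ^ 2 := by
    nlinarith [norm_nonneg g, norm_nonneg (g - G), norm_nonneg G, sq_nonneg (‖g - G‖ - ‖G‖)]
  have hdis := hdissim x
  have hgb : ‖g‖ ^ 2 ≤ 2 * B + 4 * (m + 1) * L * (flam x - flam xlam) := by
    nlinarith [hsq, hdis, hGb, mul_le_mul_of_nonneg_left hGb hm]
  have hΔ : 0 ≤ flam x - flam xlam := sub_nonneg.mpr (hxlam x)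
  have hrhs : (1 / μ) * B + 2 * (m + 1) * (L / μ) * (flam x - flam xlam)
      = (2 * B + 4 * (m + 1) * L * (flam x - flam xlam)) / (2 * μ) := by
    field_simp
    ring
  rw [hrhs, le_div_iff₀ (by positivity)]
  nlinarith [hPL, hgb]
end

section
/- For the distribution family used in the lower bound construction: if D_i is the law of Ber(1/2 + δ_i α_k) ε_k (k uniform in {1,…,d}, ε_k the canonical basis, the Bernoulli variable independent of k), with δ_i = max(0, δ − b_{i1}), and H is a family of functions h : {0,1}^d → ℝ^d such that the diameter of h over any set of diameter ≤ 1 is at most 1 (locally bounded class), then d_H(D_i, D_j) ≤ |δ_i − δ_j| ≤ b_{ij}, provided (b_{ij}) satisfies the triangle inequality. -/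
open MeasureTheory Finset

noncomputable def dH {Ξ : Type*} [MeasurableSpace Ξ] {d' : ℕ}
    (H : Set (Ξ → EuclideanSpace ℝ (Fin d'))) (D D' : Measure Ξ) : ℝ :=
  ⨆ h : H, ‖(∫ ξ, (h : Ξ → EuclideanSpace ℝ (Fin d')) ξ ∂D)
      - ∫ ξ, (h : Ξ → EuclideanSpace ℝ (Fin d')) ξ ∂D'‖

lemma my_integrable_dirac {α : Type*} [MeasurableSpace α] [MeasurableSingletonClass α]
    {E : Type*} [NormedAddCommGroup E] (f : α → E) (a : α) :
    Integrable f (Measure.dirac a) := by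
  refine (integrable_const (f a)).congr ?_
  rw [Filter.EventuallyEq, MeasureTheory.ae_dirac_eq]
  exact Filter.eventually_pure.mpr rfl

lemma my_integral_D {d d' : ℕ} (δi : ℝ) (hδi0 : 0 ≤ δi) (hδi : δi ≤ 1 / 2)
    (α : Fin d → ℝ) (hα : ∀ k, α k = 1 ∨ α k = -1)
    (h : (Fin d → ℝ) → EuclideanSpace ℝ (Fin d')) :
    ∫ ξ, h ξ ∂((d : ENNReal)⁻¹ • ∑ k : Fin d,
      (ENNReal.ofReal (1 / 2 + δi * α k) • Measure.dirac (Pi.single k (1 : ℝ)) +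
        ENNReal.ofReal (1 / 2 - δi * α k) • Measure.dirac (0 : Fin d → ℝ))) =
    (d : ℝ)⁻¹ • ∑ k : Fin d,
      ((1 / 2 + δi * α k) • h (Pi.single k 1) + (1 / 2 - δi * α k) • h 0) := by
  have habs : ∀ k, |δi * α k| ≤ 1 / 2 := by
    intro k
    rw [abs_mul]
    rw [abs_of_nonneg hδi0]
    rcases hα k with h1 | h1 <;> simp [h1] <;> linarith
  have hp : ∀ k, (0:ℝ) ≤ 1 / 2 + δi * α k := fun k => by
    have := (abs_le.mp (habs k)).1; linarith
  have hq : ∀ k, (0:ℝ) ≤ 1 / 2 - δi * α k := fun k => by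
    have := (abs_le.mp (habs k)).2; linarith
  have hint : ∀ k : Fin d, Integrable h
      (ENNReal.ofReal (1 / 2 + δi * α k) • Measure.dirac (Pi.single k (1 : ℝ)) +
        ENNReal.ofReal (1 / 2 - δi * α k) • Measure.dirac (0 : Fin d → ℝ)) := by
    intro k
    exact ((my_integrable_dirac h _).smul_measure ENNReal.ofReal_ne_top).add_measure
      ((my_integrable_dirac h _).smul_measure ENNReal.ofReal_ne_top)
  rw [integral_smul_measure, integral_finset_sum_measure (fun k _ => hint k)]
  congr 1
  · simp [ENNReal.toReal_inv]
  · refine Finset.sum_congr rfl fun k _ => ?_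
    rw [integral_add_measure ((my_integrable_dirac h _).smul_measure ENNReal.ofReal_ne_top)
      ((my_integrable_dirac h _).smul_measure ENNReal.ofReal_ne_top),
      integral_smul_measure, integral_smul_measure, integral_dirac, integral_dirac,
      ENNReal.toReal_ofReal (hp k), ENNReal.toReal_ofReal (hq k)]

/-- For the lower-bound construction: `D_i` is the law of `Ber(1/2 + δ_i α_k) ε_k` with
`k` uniform on `{1,…,d}`, `δ_i = (δ − b_{i1})⁺`, and `H` a class of measurable functions
whose image of any set of diameter `≤ 1` has diameter `≤ 1`. Then
`d_H(D_i, D_j) ≤ |δ_i − δ_j| ≤ b_{ij}`, for weights `b` satisfying the triangle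
inequality. -/
theorem lower_bound_distribution_distance {d d' N : ℕ} (hd : 0 < d) [NeZero N]
    (δ : ℝ) (hδ0 : 0 < δ) (hδ : δ ≤ 1 / 2)
    (α : Fin d → ℝ) (hα : ∀ k, α k = 1 ∨ α k = -1)
    (b : Fin N → Fin N → ℝ)
    (hbnonneg : ∀ i j, 0 ≤ b i j)
    (hbsymm : ∀ i j, b i j = b j i)
    (hbtri : ∀ i j k, b i j ≤ b i k + b k j)
    (δa : Fin N → ℝ) (hδa : ∀ i, δa i = max (δ - b i 0) 0)
    (D : Fin N → Measure (Fin d → ℝ))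
    (hD : ∀ i, D i = (d : ENNReal)⁻¹ • ∑ k : Fin d,
      (ENNReal.ofReal (1 / 2 + δa i * α k) • Measure.dirac (Pi.single k (1 : ℝ)) +
        ENNReal.ofReal (1 / 2 - δa i * α k) • Measure.dirac (0 : Fin d → ℝ)))
    (H : Set ((Fin d → ℝ) → EuclideanSpace ℝ (Fin d')))
    (hHmeas : ∀ h ∈ H, Measurable h)
    -- locally bounded class: diameter of the image of any 1-ball is at most 1
    (hHloc : ∀ h ∈ H, ∀ ξ ξ' : Fin d → ℝ, dist ξ ξ' ≤ 1 → ‖h ξ - h ξ'‖ ≤ 1) :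
    ∀ i j, dH H (D i) (D j) ≤ |δa i - δa j| ∧ |δa i - δa j| ≤ b i j := by
  have hδa0 : ∀ i, 0 ≤ δa i := fun i => (hδa i) ▸ le_max_right _ _
  have hδa2 : ∀ i, δa i ≤ 1 / 2 := fun i => by
    rw [hδa i]
    exact max_le (by linarith [hbnonneg i 0]) (by linarith)
  intro i j
  constructor
  · -- dH bound
    refine Real.iSup_le (fun hh => ?_) (abs_nonneg _)
    obtain ⟨h, hhH⟩ := hh
    simp only
    rw [hD i, hD j, my_integral_D (δa i) (hδa0 i) (hδa2 i) α hα h,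
      my_integral_D (δa j) (hδa0 j) (hδa2 j) α hα h, ← smul_sub, ← Finset.sum_sub_distrib]
    have hterm : ∀ k : Fin d,
        ((1 / 2 + δa i * α k) • h (Pi.single k 1) + (1 / 2 - δa i * α k) • h 0)
          - ((1 / 2 + δa j * α k) • h (Pi.single k 1) + (1 / 2 - δa j * α k) • h 0)
        = ((δa i - δa j) * α k) • (h (Pi.single k 1) - h 0) := by
      intro k
      module
    rw [Finset.sum_congr rfl fun k _ => hterm k]
    have hnorm : ∀ k : Fin d,
        ‖((δa i - δa j) * α k) • (h (Pi.single k 1) - h 0)‖ ≤ |δa i - δa j| := by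
      intro k
      rw [norm_smul, Real.norm_eq_abs, abs_mul]
      have hαk : |α k| = 1 := by rcases hα k with h1 | h1 <;> simp [h1]
      have hdist : dist (Pi.single k (1:ℝ)) (0 : Fin d → ℝ) ≤ 1 := by
        rw [dist_pi_le_iff zero_le_one]
        intro l
        by_cases hl : l = k <;> simp [Pi.single_apply, hl, Real.dist_eq]
      have := hHloc h hhH (Pi.single k 1) 0 hdist
      calc |δa i - δa j| * |α k| * ‖h (Pi.single k 1) - h 0‖
          ≤ |δa i - δa j| * 1 * 1 := by
            apply mul_le_mul (by rw [hαk]) this (norm_nonneg _)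
              (by positivity)
        _ = |δa i - δa j| := by ring
    calc ‖(d:ℝ)⁻¹ • ∑ k : Fin d, ((δa i - δa j) * α k) • (h (Pi.single k 1) - h 0)‖
        ≤ (d:ℝ)⁻¹ * ∑ k : Fin d, ‖((δa i - δa j) * α k) • (h (Pi.single k 1) - h 0)‖ := by
          rw [norm_smul, Real.norm_eq_abs, abs_of_nonneg (by positivity)]
          gcongr
          exact norm_sum_le _ _
      _ ≤ (d:ℝ)⁻¹ * ∑ _k : Fin d, |δa i - δa j| := by
          gcongr with k
          exact hnorm k
      _ = |δa i - δa j| := by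
          rw [Finset.sum_const, Finset.card_univ, Fintype.card_fin, nsmul_eq_mul]
          field_simp
  · rw [hδa i, hδa j]
    have h1 : b i 0 ≤ b i j + b j 0 := hbtri i 0 j
    have h2 : b j 0 ≤ b i j + b i 0 := by rw [hbsymm i j]; exact hbtri j 0 i
    calc |max (δ - b i 0) 0 - max (δ - b j 0) 0| ≤ |(δ - b i 0) - (δ - b j 0)| :=
          abs_max_sub_max_le_abs _ _ _
      _ = |b j 0 - b i 0| := by ring_nf
      _ ≤ b i j := abs_sub_le_iff.mpr ⟨by linarith, by linarith⟩
end
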